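/- The energy function V(f, ω) = ½ fᵀ Y_b^{-1} f + ½ (ω − ω_∞ 1)ᵀ M (ω − ω_∞ 1) (after shifting f by its equilibrium value f_∞) is nonincreasing along trajectories of the closed-loop system ḟ = Y_b D ω, M ω̇ = −E ω − Dᵀ f + p* + u, provided the input satisfies (ω_i − ω_∞) u_i ≤ 0 componentwise; specifically, d/dt V(f(t) − f_∞, ω(t)) = −(ω − ω_∞ 1)ᵀ E (ω − ω_∞ 1) + Σ_i (ω_i − ω_∞) u_i ≤ 0. -/

import Mathlib

open Matrix

/-- The shifted energy V(f−f_∞, ω) = ½ (f−f_∞)ᵀ Y_b⁻¹ (f−f_∞) + ½ (ω−ω_∞1)ᵀ M (ω−ω_∞1)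
is nonincreasing along closed-loop trajectories when (ω_i − ω_∞) u_i ≤ 0:
its derivative equals −(ω−ω_∞1)ᵀ E (ω−ω_∞1) + Σ_i (ω_i−ω_∞) u_i ≤ 0. -/
theorem energy_function_nonincreasing
    (m n : ℕ) (yb : Fin m → ℝ) (md ed : Fin n → ℝ)
    (hyb : ∀ k, 0 < yb k) (hmd : ∀ i, 0 < md i) (hed : ∀ i, 0 < ed i)
    (D : Matrix (Fin m) (Fin n) ℝ) (pstar : Fin n → ℝ)
    (finf : Fin m → ℝ) (ωinf : ℝ)
    -- equilibrium conditions
    (heq1 : D *ᵥ (fun _ => ωinf) = 0)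
    (heq2 : -(Matrix.diagonal ed *ᵥ (fun _ => ωinf)) - Dᵀ *ᵥ finf + pstar = 0)
    (f : ℝ → Fin m → ℝ) (ω : ℝ → Fin n → ℝ) (u : ℝ → Fin n → ℝ)
    (hf : ∀ t : ℝ, ∀ e : Fin m,
      HasDerivAt (fun s => f s e) ((Matrix.diagonal yb *ᵥ (D *ᵥ ω t)) e) t)
    (hω : ∀ t : ℝ, ∀ i : Fin n,
      HasDerivAt (fun s => ω s i)
        ((-(Matrix.diagonal ed *ᵥ ω t) - Dᵀ *ᵥ f t + pstar + u t) i / md i) t)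
    (hsign : ∀ t : ℝ, ∀ i : Fin n, (ω t i - ωinf) * u t i ≤ 0) :
    ∀ t : ℝ,
      HasDerivAt
        (fun s => (1/2) * ∑ e : Fin m, (f s e - finf e)^2 / yb e
          + (1/2) * ∑ i : Fin n, md i * (ω s i - ωinf)^2)
        (-(∑ i : Fin n, ed i * (ω t i - ωinf)^2)
          + ∑ i : Fin n, (ω t i - ωinf) * u t i) t ∧
      (-(∑ i : Fin n, ed i * (ω t i - ωinf)^2)
          + ∑ i : Fin n, (ω t i - ωinf) * u t i) ≤ 0 := by
  intro t
  have hyb' : ∀ k, yb k ≠ 0 := fun k => (hyb k).ne'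
  have hmd' : ∀ i, md i ≠ 0 := fun i => (hmd i).ne'
  constructor
  · -- each summand of the first sum
    have h1 : ∀ e : Fin m, HasDerivAt (fun s => (f s e - finf e)^2 / yb e)
        ((2 : ℕ) * (f t e - finf e) ^ 1 * ((Matrix.diagonal yb *ᵥ (D *ᵥ ω t)) e) / yb e) t := by
      intro e
      exact (((hf t e).sub_const (finf e)).pow 2).div_const (yb e)
    have h2 : ∀ i : Fin n, HasDerivAt (fun s => md i * (ω s i - ωinf)^2)
        (md i * ((2 : ℕ) * (ω t i - ωinf) ^ 1 *
          ((-(Matrix.diagonal ed *ᵥ ω t) - Dᵀ *ᵥ f t + pstar + u t) i / md i))) t := by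
      intro i
      exact (((hω t i).sub_const ωinf).pow 2).const_mul (md i)
    have hD : HasDerivAt
        (fun s => (1/2) * ∑ e : Fin m, (f s e - finf e)^2 / yb e
          + (1/2) * ∑ i : Fin n, md i * (ω s i - ωinf)^2)
        ((1/2) * ∑ e : Fin m, ((2 : ℕ) * (f t e - finf e) ^ 1 *
            ((Matrix.diagonal yb *ᵥ (D *ᵥ ω t)) e) / yb e)
          + (1/2) * ∑ i : Fin n, (md i * ((2 : ℕ) * (ω t i - ωinf) ^ 1 *
            ((-(Matrix.diagonal ed *ᵥ ω t) - Dᵀ *ᵥ f t + pstar + u t) i / md i)))) t := by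
      exact ((HasDerivAt.fun_sum (fun e _ => h1 e)).const_mul (1/2)).add
        ((HasDerivAt.fun_sum (fun i _ => h2 i)).const_mul (1/2))
    convert hD using 1
    -- now prove the derivative expressions agree
    have step1 : (1/2 : ℝ) * ∑ e : Fin m, ((2 : ℕ) * (f t e - finf e) ^ 1 *
        ((Matrix.diagonal yb *ᵥ (D *ᵥ ω t)) e) / yb e)
        = ∑ e : Fin m, (f t e - finf e) * (D *ᵥ ω t) e := by
      rw [Finset.mul_sum]
      refine Finset.sum_congr rfl fun e _ => ?_
      have h := hyb' e
      rw [Matrix.mulVec_diagonal]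
      field_simp
      ring
    have step2 : (1/2 : ℝ) * ∑ i : Fin n, (md i * ((2 : ℕ) * (ω t i - ωinf) ^ 1 *
        ((-(Matrix.diagonal ed *ᵥ ω t) - Dᵀ *ᵥ f t + pstar + u t) i / md i)))
        = ∑ i : Fin n, (ω t i - ωinf) *
          ((-(Matrix.diagonal ed *ᵥ ω t) - Dᵀ *ᵥ f t + pstar + u t) i) := by
      rw [Finset.mul_sum]
      refine Finset.sum_congr rfl fun i _ => ?_
      have h := hmd' i
      field_simp
      ring
    rw [step1, step2]
    -- rewrite pstar via equilibrium
    have hp : ∀ i, pstar i = ed i * ωinf + (Dᵀ *ᵥ finf) i := by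
      intro i
      have := congrFun heq2 i
      simp only [Pi.add_apply, Pi.sub_apply, Pi.neg_apply, Pi.zero_apply,
        Matrix.mulVec_diagonal] at this
      linarith
    have hbr : ∀ i : Fin n, (-(Matrix.diagonal ed *ᵥ ω t) - Dᵀ *ᵥ f t + pstar + u t) i
        = -(ed i * (ω t i - ωinf)) - (Dᵀ *ᵥ (f t - finf)) i + u t i := by
      intro i
      simp only [Pi.add_apply, Pi.sub_apply, Pi.neg_apply, Matrix.mulVec_diagonal,
        Matrix.mulVec_sub, hp i]
      ring
    simp only [hbr]
    -- first sum: move D to the other side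
    have step3 : ∑ e : Fin m, (f t e - finf e) * (D *ᵥ ω t) e
        = ∑ i : Fin n, (Dᵀ *ᵥ (f t - finf)) i * (ω t i - ωinf) := by
      have e1 : ∑ e : Fin m, (f t e - finf e) * (D *ᵥ ω t) e
          = (f t - finf) ⬝ᵥ (D *ᵥ ω t) := by
        simp only [dotProduct, Pi.sub_apply]
      have e2 : (f t - finf) ⬝ᵥ (D *ᵥ ω t) = (Dᵀ *ᵥ (f t - finf)) ⬝ᵥ ω t := by
        rw [Matrix.dotProduct_mulVec, Matrix.mulVec_transpose]
      have e3 : (Dᵀ *ᵥ (f t - finf)) ⬝ᵥ (fun _ => ωinf) = 0 := by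
        rw [dotProduct_comm, Matrix.dotProduct_mulVec, Matrix.vecMul_transpose, heq1]
        simp [dotProduct]
      have e4 : (Dᵀ *ᵥ (f t - finf)) ⬝ᵥ ω t
          = ∑ i : Fin n, (Dᵀ *ᵥ (f t - finf)) i * (ω t i - ωinf) := by
        have := e3
        simp only [dotProduct] at this ⊢
        rw [← sub_zero (∑ i : Fin n, (Dᵀ *ᵥ (f t - finf)) i * ω t i), ← this,
          ← Finset.sum_sub_distrib]
        refine Finset.sum_congr rfl fun i _ => ?_
        ring
      rw [e1, e2, e4]
    rw [step3, ← Finset.sum_add_distrib]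
    rw [show -(∑ i : Fin n, ed i * (ω t i - ωinf)^2) = ∑ i : Fin n, -(ed i * (ω t i - ωinf)^2)
      from (Finset.sum_neg_distrib _).symm, ← Finset.sum_add_distrib]
    refine Finset.sum_congr rfl fun i _ => ?_
    ring
  · have h1 : ∀ i ∈ Finset.univ, (ω t i - ωinf) * u t i ≤ 0 := fun i _ => hsign t i
    have h2 : (0:ℝ) ≤ ∑ i : Fin n, ed i * (ω t i - ωinf)^2 :=
      Finset.sum_nonneg fun i _ => mul_nonneg (hed i).le (sq_nonneg _)
    have := Finset.sum_nonpos h1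
    linarith
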